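/- In an E-unitary inverse semigroup S possessing a least idempotent e, the kernel J_e equals the maximal subgroup H_e and is isomorphic to the maximal group image S/σ. -/

import Mathlib

inductive InvGen {S : Type*} [Mul S] [Inv S] (X : Set S) : S → Prop
  | base {x : S} : x ∈ X → InvGen X x
  | mul {a b : S} : InvGen X a → InvGen X b → InvGen X (a * b)
  | inv {a : S} : InvGen X a → InvGen X a⁻¹

def IsInvSub {S : Type*} [Mul S] [Inv S] (T : Set S) : Prop :=
  (∀ a ∈ T, ∀ b ∈ T, a * b ∈ T) ∧ ∀ a ∈ T, a⁻¹ ∈ T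

def InvFG {S : Type*} [Mul S] [Inv S] (T : Set S) : Prop :=
  ∃ X : Finset S, ↑X ⊆ T ∧ T = {s | InvGen (↑X : Set S) s}

def Howson (S : Type*) [Mul S] [Inv S] : Prop :=
  ∀ U V : Set S, IsInvSub U → IsInvSub V → InvFG U → InvFG V → InvFG (U ∩ V)
class InverseSemigroup (S : Type*) extends Semigroup S, Inv S where
  mul_inv_mul : ∀ a : S, a * a⁻¹ * a = a
  inv_invol : ∀ a : S, a⁻¹⁻¹ = a
  idem_comm : ∀ a b : S, (a * a⁻¹) * (b * b⁻¹) = (b * b⁻¹) * (a * a⁻¹)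

def Idl {S : Type*} [Semigroup S] (a : S) : Set S :=
  {a} ∪ {x | ∃ s, s * a = x} ∪ {x | ∃ s, a * s = x} ∪ {x | ∃ s t, s * a * t = x}

def Jrel {S : Type*} [Semigroup S] (a b : S) : Prop := Idl a = Idl b

def Jcl {S : Type*} [Semigroup S] (a : S) : Set S := {b | Jrel a b}

section AuxL
variable {S : Type*} [InverseSemigroup S]

lemma isg1 (a : S) : a * a⁻¹ * a = a := InverseSemigroup.mul_inv_mul a
lemma isg2 (a : S) : a⁻¹⁻¹ = a := InverseSemigroup.inv_invol a
lemma isg3 (a b : S) : (a * a⁻¹) * (b * b⁻¹) = (b * b⁻¹) * (a * a⁻¹) :=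
  InverseSemigroup.idem_comm a b
lemma isg4 (a : S) : a⁻¹ * a * a⁻¹ = a⁻¹ := by
  have h := isg1 a⁻¹; rwa [isg2] at h
lemma isg5 (a : S) : (a * a⁻¹) * (a * a⁻¹) = a * a⁻¹ := by
  rw [← mul_assoc, isg1]
lemma isg6 (a : S) : (a⁻¹ * a) * (a⁻¹ * a) = a⁻¹ * a := by
  have h := isg5 a⁻¹; rwa [isg2] at h

lemma inv_of_idem {f : S} (hf : f * f = f) : f⁻¹ = f := by
  have hyx : (f⁻¹ * f) * (f * f⁻¹) = f⁻¹ := by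
    rw [mul_assoc, ← mul_assoc f f f⁻¹, hf, ← mul_assoc, isg4]
  have hcomm : (f * f⁻¹) * (f⁻¹ * f) = (f⁻¹ * f) * (f * f⁻¹) := by
    have h := isg3 f f⁻¹; rwa [isg2] at h
  have hxy : (f * f⁻¹) * (f⁻¹ * f) = f⁻¹ := hcomm.trans hyx
  have hfx : f * (f * f⁻¹) = f * f⁻¹ := by rw [← mul_assoc, hf]
  have hyf : (f⁻¹ * f) * f = f⁻¹ * f := by rw [mul_assoc, hf]
  have key : f * ((f * f⁻¹) * (f⁻¹ * f)) * f = (f * f⁻¹) * (f⁻¹ * f) := by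
    rw [← mul_assoc f (f * f⁻¹) (f⁻¹ * f), hfx, mul_assoc (f * f⁻¹) (f⁻¹ * f) f, hyf]
  calc f⁻¹ = (f * f⁻¹) * (f⁻¹ * f) := hxy.symm
    _ = f * ((f * f⁻¹) * (f⁻¹ * f)) * f := key.symm
    _ = f * f⁻¹ * f := by rw [hxy]
    _ = f := isg1 f

lemma idem_comm' {f g : S} (hf : f * f = f) (hg : g * g = g) : f * g = g * f := by
  have h1 : f * f⁻¹ = f := by rw [inv_of_idem hf, hf]
  have h2 : g * g⁻¹ = g := by rw [inv_of_idem hg, hg]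
  have h := isg3 f g
  rwa [h1, h2] at h

lemma isg_inv_unique {a x y : S} (hxa : a * x * a = a) (hx : x * a * x = x)
    (hya : a * y * a = a) (hy : y * a * y = y) : x = y := by
  have iax : (a * x) * (a * x) = a * x := by rw [← mul_assoc, hxa]
  have ixa : (x * a) * (x * a) = x * a := by rw [← mul_assoc, hx]
  have iay : (a * y) * (a * y) = a * y := by rw [← mul_assoc, hya]
  have iya : (y * a) * (y * a) = y * a := by rw [← mul_assoc, hy]
  have hx' : x = x * a * y := by
    calc x = x * (a * y * a) * x := by rw [hya, hx]
      _ = x * ((a * y) * (a * x)) := by simp only [mul_assoc]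
      _ = x * ((a * x) * (a * y)) := by rw [idem_comm' iay iax]
      _ = (x * a * x) * (a * y) := by simp only [mul_assoc]
      _ = x * a * y := by rw [hx]; simp only [mul_assoc]
  have hy' : y = x * a * y := by
    calc y = y * (a * x * a) * y := by rw [hxa, hy]
      _ = ((y * a) * (x * a)) * y := by simp only [mul_assoc]
      _ = ((x * a) * (y * a)) * y := by rw [idem_comm' iya ixa]
      _ = (x * a) * (y * a * y) := by simp only [mul_assoc]
      _ = x * a * y := by rw [hy]
  exact hx'.trans hy'.symm

lemma comm2 (a b : S) : (b * b⁻¹) * (a⁻¹ * a) = (a⁻¹ * a) * (b * b⁻¹) := by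
  have h := isg3 b a⁻¹; rwa [isg2] at h

lemma inv_anti (a b : S) : (a * b)⁻¹ = b⁻¹ * a⁻¹ := by
  have h1 : (a * b) * (b⁻¹ * a⁻¹) * (a * b) = a * b := by
    calc (a * b) * (b⁻¹ * a⁻¹) * (a * b) = a * ((b * b⁻¹) * (a⁻¹ * a)) * b := by
          simp only [mul_assoc]
      _ = a * ((a⁻¹ * a) * (b * b⁻¹)) * b := by rw [comm2]
      _ = (a * a⁻¹ * a) * (b * b⁻¹ * b) := by simp only [mul_assoc]
      _ = a * b := by rw [isg1, isg1]
  have h2 : (b⁻¹ * a⁻¹) * (a * b) * (b⁻¹ * a⁻¹) = b⁻¹ * a⁻¹ := by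
    calc (b⁻¹ * a⁻¹) * (a * b) * (b⁻¹ * a⁻¹)
        = b⁻¹ * ((a⁻¹ * a) * (b * b⁻¹)) * a⁻¹ := by simp only [mul_assoc]
      _ = b⁻¹ * ((b * b⁻¹) * (a⁻¹ * a)) * a⁻¹ := by rw [comm2]
      _ = (b⁻¹ * b * b⁻¹) * (a⁻¹ * a * a⁻¹) := by simp only [mul_assoc]
      _ = b⁻¹ * a⁻¹ := by rw [isg4, isg4]
  exact isg_inv_unique (isg1 (a * b)) (isg4 (a * b)) h1 h2

lemma conj_idem (s : S) {f : S} (hf : f * f = f) :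
    (s * f * s⁻¹) * (s * f * s⁻¹) = s * f * s⁻¹ := by
  calc (s * f * s⁻¹) * (s * f * s⁻¹)
      = s * ((f * (s⁻¹ * s)) * (f * s⁻¹)) := by simp only [mul_assoc]
    _ = s * (((s⁻¹ * s) * f) * (f * s⁻¹)) := by rw [idem_comm' hf (isg6 s)]
    _ = (s * s⁻¹ * s) * ((f * f) * s⁻¹) := by simp only [mul_assoc]
    _ = s * f * s⁻¹ := by rw [isg1, hf]; simp only [mul_assoc]

variable {e : S}

lemma conj_e (he : e * e = e) (hl : ∀ f : S, f * f = f → e * f = e) (s : S) :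
    s⁻¹ * e * s = e := by
  have hu : (s * e * s⁻¹) * (s * e * s⁻¹) = s * e * s⁻¹ := conj_idem s he
  have hv : (s⁻¹ * e * s) * (s⁻¹ * e * s) = s⁻¹ * e * s := by
    have h := conj_idem s⁻¹ he; rwa [isg2] at h
  have h1 : e * (s * e * s⁻¹) = e := hl _ hu
  have h2 : e * (s⁻¹ * s) = e := hl _ (isg6 s)
  have key : s⁻¹ * e * s = (s⁻¹ * e * s) * e := by
    calc s⁻¹ * e * s = s⁻¹ * (e * (s * e * s⁻¹)) * s := by rw [h1]
      _ = (s⁻¹ * e * s) * (e * (s⁻¹ * s)) := by simp only [mul_assoc]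
      _ = (s⁻¹ * e * s) * e := by rw [h2]
  rw [key, idem_comm' hv he]
  exact hl _ hv

lemma conj_e' (he : e * e = e) (hl : ∀ f : S, f * f = f → e * f = e) (s : S) :
    s * e * s⁻¹ = e := by
  have h := conj_e he hl s⁻¹; rwa [isg2] at h

end AuxL

section IdlL
variable {S : Type*} [Semigroup S]

lemma mem_idl_iff {a x : S} :
    x ∈ Idl a ↔ x = a ∨ (∃ s, s * a = x) ∨ (∃ s, a * s = x) ∨ (∃ s t, s * a * t = x) := by
  simp only [Idl, Set.mem_union, Set.mem_singleton_iff, Set.mem_setOf_eq, or_assoc]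

lemma idl_mul_left {b x : S} (z : S) (hx : x ∈ Idl b) : z * x ∈ Idl b := by
  rw [mem_idl_iff] at hx ⊢
  rcases hx with rfl | ⟨s, rfl⟩ | ⟨s, rfl⟩ | ⟨s, t, rfl⟩
  · exact Or.inr (Or.inl ⟨z, rfl⟩)
  · exact Or.inr (Or.inl ⟨z * s, by rw [mul_assoc]⟩)
  · exact Or.inr (Or.inr (Or.inr ⟨z, s, by rw [mul_assoc]⟩))
  · exact Or.inr (Or.inr (Or.inr ⟨z * s, t, by simp only [mul_assoc]⟩))

lemma idl_mul_right {b x : S} (z : S) (hx : x ∈ Idl b) : x * z ∈ Idl b := by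
  rw [mem_idl_iff] at hx ⊢
  rcases hx with rfl | ⟨s, rfl⟩ | ⟨s, rfl⟩ | ⟨s, t, rfl⟩
  · exact Or.inr (Or.inr (Or.inl ⟨z, rfl⟩))
  · exact Or.inr (Or.inr (Or.inr ⟨s, z, rfl⟩))
  · exact Or.inr (Or.inr (Or.inl ⟨s * z, by rw [mul_assoc]⟩))
  · exact Or.inr (Or.inr (Or.inr ⟨s, t * z, by simp only [mul_assoc]⟩))

lemma idl_subset {a b : S} (h : a ∈ Idl b) : Idl a ⊆ Idl b := by
  intro z hz
  rw [mem_idl_iff] at hz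
  rcases hz with rfl | ⟨p, rfl⟩ | ⟨p, rfl⟩ | ⟨p, q, rfl⟩
  · exact h
  · exact idl_mul_left p h
  · exact idl_mul_right p h
  · exact idl_mul_right q (idl_mul_left p h)

end IdlL

section MainAux
variable {S : Type*} [InverseSemigroup S] {e : S}

lemma h_of_mid (he : e * e = e) (hl : ∀ f : S, f * f = f → e * f = e) (x y : S) :
    (x * e * y) * (x * e * y)⁻¹ = e ∧ (x * e * y)⁻¹ * (x * e * y) = e := by
  have hinv : (x * e * y)⁻¹ = y⁻¹ * (e * x⁻¹) := by
    rw [inv_anti, inv_anti, inv_of_idem he]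
  constructor
  · rw [hinv]
    calc (x * e * y) * (y⁻¹ * (e * x⁻¹))
        = x * ((e * (y * y⁻¹)) * (e * x⁻¹)) := by simp only [mul_assoc]
      _ = x * (e * (e * x⁻¹)) := by rw [hl _ (isg5 y)]
      _ = x * e * x⁻¹ := by rw [← mul_assoc e e, he]; simp only [mul_assoc]
      _ = e := conj_e' he hl x
  · rw [hinv]
    calc (y⁻¹ * (e * x⁻¹)) * (x * e * y)
        = y⁻¹ * ((e * (x⁻¹ * x)) * (e * y)) := by simp only [mul_assoc]
      _ = y⁻¹ * (e * (e * y)) := by rw [hl _ (isg6 x)]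
      _ = y⁻¹ * e * y := by rw [← mul_assoc e e, he]; simp only [mul_assoc]
      _ = e := conj_e he hl y

lemma h_of_ese (he : e * e = e) (hl : ∀ f : S, f * f = f → e * f = e) (s : S) :
    (e * s * e) * (e * s * e)⁻¹ = e ∧ (e * s * e)⁻¹ * (e * s * e) = e := by
  have hinv : (e * s * e)⁻¹ = e * (s⁻¹ * e) := by
    rw [inv_anti, inv_anti, inv_of_idem he]
  constructor
  · rw [hinv]
    calc (e * s * e) * (e * (s⁻¹ * e))
        = e * (s * ((e * e) * (s⁻¹ * e))) := by simp only [mul_assoc]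
      _ = e * (s * (e * (s⁻¹ * e))) := by rw [he]
      _ = (e * (s * e * s⁻¹)) * e := by simp only [mul_assoc]
      _ = e := by rw [conj_e' he hl s, he, he]
  · rw [hinv]
    calc (e * (s⁻¹ * e)) * (e * s * e)
        = e * (s⁻¹ * ((e * e) * (s * e))) := by simp only [mul_assoc]
      _ = e * (s⁻¹ * (e * (s * e))) := by rw [he]
      _ = (e * (s⁻¹ * e * s)) * e := by simp only [mul_assoc]
      _ = e := by rw [conj_e he hl s, he, he]

end MainAux

theorem stmt_7 {S : Type*} [InverseSemigroup S]
    (hEunitary : ∀ e s : S, e * e = e → (e * s) * (e * s) = e * s → s * s = s)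
    (e : S) (he : e * e = e) (hleast : ∀ f : S, f * f = f → e * f = e)
    (G : Type*) [Group G] (f : S → G)
    (hhom : ∀ a b : S, f (a * b) = f a * f b)
    (hsurj : Function.Surjective f)
    (hker : ∀ a b : S, f a = f b ↔ ∃ g : S, g * g = g ∧ g * a = g * b) :
    Jcl e = {s : S | s * s⁻¹ = e ∧ s⁻¹ * s = e} ∧
      Set.BijOn f {s : S | s * s⁻¹ = e ∧ s⁻¹ * s = e} Set.univ := by
  constructor
  · ext a
    simp only [Jcl, Jrel, Set.mem_setOf_eq]
    constructor
    · intro hJ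
      have ha : a ∈ Idl e := by
        rw [hJ]; exact mem_idl_iff.mpr (Or.inl rfl)
      rw [mem_idl_iff] at ha
      rcases ha with rfl | ⟨x, rfl⟩ | ⟨y, rfl⟩ | ⟨x, y, rfl⟩
      · constructor <;> rw [inv_of_idem he, he]
      · have h := h_of_mid he hleast x e
        have hxe : x * e * e = x * e := by rw [mul_assoc, he]
        rwa [hxe] at h
      · have h := h_of_mid he hleast e y
        have hey : e * e * y = e * y := by rw [he]
        rwa [hey] at h
      · exact h_of_mid he hleast x y
    · rintro ⟨h1, h2⟩
      have hea : e * a = a := by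
        have h := isg1 a; rwa [h1] at h
      have hae : e ∈ Idl a := mem_idl_iff.mpr (Or.inr (Or.inr (Or.inl ⟨a⁻¹, h1⟩)))
      have haa : a ∈ Idl e := mem_idl_iff.mpr (Or.inr (Or.inr (Or.inl ⟨a, hea⟩)))
      exact Set.Subset.antisymm (idl_subset hae) (idl_subset haa)
  · have hfe : f e = 1 := by
      have h : f e = f e * f e := by rw [← hhom, he]
      exact (right_eq_mul.mp h)
    refine ⟨fun x _ => Set.mem_univ _, ?_, ?_⟩
    · rintro a ⟨ha1, _⟩ b ⟨hb1, _⟩ hfab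
      obtain ⟨g, hg, hgab⟩ := (hker a b).mp hfab
      have hea : e * a = a := by have h := isg1 a; rwa [ha1] at h
      have heb : e * b = b := by have h := isg1 b; rwa [hb1] at h
      calc a = e * a := hea.symm
        _ = e * (g * a) := by rw [← mul_assoc, hleast g hg]
        _ = e * (g * b) := by rw [hgab]
        _ = b := by rw [← mul_assoc, hleast g hg, heb]
    · intro g _
      obtain ⟨s, hs⟩ := hsurj g
      exact ⟨e * s * e, h_of_ese he hleast s,
        by rw [hhom, hhom, hfe, hs, one_mul, mul_one]⟩
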